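/- Let V : (0,∞) → ℝ be given by V(t) = c·t^{λ-1}·(-log t)^{m-1} for constants c > 0, λ > 0 and integer m ≥ 1. Then its Laplace transform Z(n) = ∫₀^1 exp(-n t) V(t) dt satisfies Z(n)·n^λ/(log n)^{m-1} → c·Γ(λ) as n → ∞. -/

import Mathlib

open Real MeasureTheory Filter Set

private lemma log_abs_bound_le {ε : ℝ} (hε : 0 < ε) {s : ℝ} (hs : 0 < s) (hs1 : s ≤ 1) :
    1 + |Real.log s| ≤ (1 + 1 / ε) * s ^ (-ε) := by
  have h1 : |Real.log s| = Real.log s⁻¹ := by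
    rw [Real.log_inv, abs_of_nonpos (Real.log_nonpos hs.le hs1)]
  have h2 : Real.log s⁻¹ ≤ s⁻¹ ^ ε / ε := Real.log_le_rpow_div (inv_nonneg.2 hs.le) hε
  have h3 : s⁻¹ ^ ε = s ^ (-ε) := by
    rw [Real.inv_rpow hs.le, ← Real.rpow_neg hs.le]
  have h4 : (1 : ℝ) ≤ s ^ (-ε) := by
    have := Real.rpow_le_rpow_of_exponent_ge hs hs1 (by linarith : -ε ≤ 0)
    rwa [Real.rpow_zero] at this
  have h5 : (1 + 1 / ε) * s ^ (-ε) = s ^ (-ε) + s ^ (-ε) / ε := by ring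
  have h6 : |Real.log s| ≤ s ^ (-ε) / ε := by
    rw [h1]; calc Real.log s⁻¹ ≤ s⁻¹ ^ ε / ε := h2
      _ = s ^ (-ε) / ε := by rw [h3]
  linarith

private lemma log_abs_bound_ge {ε : ℝ} (hε : 0 < ε) {s : ℝ} (hs1 : 1 ≤ s) :
    1 + |Real.log s| ≤ (1 + 1 / ε) * s ^ ε := by
  have h2 : Real.log s ≤ s ^ ε / ε := Real.log_le_rpow_div (by linarith) hε
  have h4 : (1 : ℝ) ≤ s ^ ε := Real.one_le_rpow hs1 hε.le
  have h6 : |Real.log s| ≤ s ^ ε / ε := by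
    rw [abs_of_nonneg (Real.log_nonneg hs1)]; exact h2
  have h5 : (1 + 1 / ε) * s ^ ε = s ^ ε + s ^ ε / ε := by ring
  linarith

private lemma pow_log_bound_le {ε : ℝ} (hε : 0 < ε) (k : ℕ) {s : ℝ} (hs : 0 < s) (hs1 : s ≤ 1) :
    (1 + |Real.log s|) ^ k ≤ (1 + 1 / ε) ^ k * s ^ (-(ε * k)) := by
  have h := pow_le_pow_left₀ (by positivity) (log_abs_bound_le hε hs hs1) k
  have h2 : ((1 + 1 / ε) * s ^ (-ε)) ^ k = (1 + 1 / ε) ^ k * s ^ (-(ε * k)) := by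
    rw [mul_pow]
    congr 1
    rw [← Real.rpow_natCast (s ^ (-ε)) k, ← Real.rpow_mul hs.le, neg_mul]
  linarith [h, h2.ge]

private lemma pow_log_bound_ge {ε : ℝ} (hε : 0 < ε) (k : ℕ) {s : ℝ} (hs : 0 < s) (hs1 : 1 ≤ s) :
    (1 + |Real.log s|) ^ k ≤ (1 + 1 / ε) ^ k * s ^ (ε * k) := by
  have h := pow_le_pow_left₀ (by positivity) (log_abs_bound_ge hε hs1) k
  have h2 : ((1 + 1 / ε) * s ^ ε) ^ k = (1 + 1 / ε) ^ k * s ^ (ε * k) := by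
    rw [mul_pow]
    congr 1
    rw [← Real.rpow_natCast (s ^ ε) k, ← Real.rpow_mul hs.le]
  linarith [h, h2.ge]

set_option maxHeartbeats 1000000 in
/-- For `V(t) = c t^(l-1) (-log t)^(m-1)` with `c > 0`, `l > 0`, `m ≥ 1`,
the Laplace transform `Z(n) = ∫₀¹ e^(-nt) V(t) dt` satisfies
`Z(n) n^l / (log n)^(m-1) → c Γ(l)` as `n → ∞`. -/
theorem laplace_asymptotic (c l : ℝ) (hc : c > 0) (hl : l > 0) (m : ℕ) (hm : 1 ≤ m) :
    Tendsto
      (fun n : ℝ =>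
        (∫ t in Ioo (0 : ℝ) 1,
            Real.exp (-(n * t)) * (c * t ^ (l - 1) * (-Real.log t) ^ (m - 1)))
          * n ^ l / (Real.log n) ^ (m - 1))
      atTop (nhds (c * Real.Gamma l)) := by
  obtain ⟨k, rfl⟩ : ∃ k, m = k + 1 := ⟨m - 1, (Nat.succ_pred_eq_of_pos hm).symm⟩
  simp only [Nat.add_sub_cancel]
  set ε : ℝ := l / (2 * (k + 1)) with hεdef
  have hε : 0 < ε := by positivity
  have hεk : ε * k ≤ l / 2 := by
    rw [hεdef, div_mul_eq_mul_div, div_le_div_iff₀ (by positivity) two_pos]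
    nlinarith [hl.le, Nat.cast_nonneg (α := ℝ) k]
  have hεk0 : (0:ℝ) ≤ ε * k := by positivity
  set φ : ℝ → ℝ → ℝ := fun n s =>
    Real.exp (-s) * (c * s ^ (l - 1) * (1 - Real.log s / Real.log n) ^ k) with hφ
  set F : ℝ → ℝ → ℝ := fun n => (Ioo (0:ℝ) n).indicator (φ n) with hF
  set bound : ℝ → ℝ := fun s =>
    c * (1 + 1 / ε) ^ k *
      (Real.exp (-s) * s ^ (l / 2 - 1) + Real.exp (-s) * s ^ (l + ε * k - 1)) with hbound
  have hφc : ∀ n : ℝ, ContinuousOn (φ n) (Ioi (0:ℝ)) := by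
    intro n
    simp only [hφ]
    apply ContinuousOn.mul
    · exact (Real.continuous_exp.comp continuous_neg).continuousOn
    · apply ContinuousOn.mul
      · exact continuousOn_const.mul
          (continuousOn_id.rpow_const fun x hx => Or.inl (ne_of_gt hx))
      · exact (continuousOn_const.sub
          ((Real.continuousOn_log.mono fun x hx => by simpa using ne_of_gt hx).div_const
            _)).pow k
  -- key pointwise bound
  have hkey : ∀ s : ℝ, 0 < s →
      (1 + |Real.log s|) ^ k * s ^ (l - 1) ≤
        (1 + 1 / ε) ^ k * (s ^ (l / 2 - 1) + s ^ (l + ε * k - 1)) := by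
    intro s hs0
    rcases le_or_gt s 1 with hs1 | hs1
    · have t1 := pow_log_bound_le hε k hs0 hs1
      have t2 : s ^ (-(ε * (k:ℝ))) ≤ s ^ (-(l / 2)) :=
        Real.rpow_le_rpow_of_exponent_ge hs0 hs1 (by linarith)
      have t3 : s ^ (-(l / 2)) * s ^ (l - 1) = s ^ (l / 2 - 1) := by
        rw [← Real.rpow_add hs0]; ring_nf
      have t4 : (1 + |Real.log s|) ^ k * s ^ (l - 1) ≤
          (1 + 1 / ε) ^ k * s ^ (-(l / 2)) * s ^ (l - 1) := by
        apply mul_le_mul_of_nonneg_right _ (Real.rpow_nonneg hs0.le _)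
        calc (1 + |Real.log s|) ^ k ≤ (1 + 1 / ε) ^ k * s ^ (-(ε * (k:ℝ))) := t1
          _ ≤ (1 + 1 / ε) ^ k * s ^ (-(l / 2)) :=
            mul_le_mul_of_nonneg_left t2 (by positivity)
      have t5 : (1 + 1 / ε) ^ k * s ^ (-(l / 2)) * s ^ (l - 1)
          = (1 + 1 / ε) ^ k * s ^ (l / 2 - 1) := by rw [mul_assoc, t3]
      have t6 : (0:ℝ) ≤ s ^ (l + ε * k - 1) := Real.rpow_nonneg hs0.le _
      nlinarith [pow_nonneg (by positivity : (0:ℝ) ≤ 1 + 1/ε) k]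
    · have t1 := pow_log_bound_ge hε k hs0 hs1.le
      have t3 : s ^ (ε * (k:ℝ)) * s ^ (l - 1) = s ^ (l + ε * k - 1) := by
        rw [← Real.rpow_add hs0]; ring_nf
      have t4 : (1 + |Real.log s|) ^ k * s ^ (l - 1) ≤
          (1 + 1 / ε) ^ k * s ^ (ε * (k:ℝ)) * s ^ (l - 1) :=
        mul_le_mul_of_nonneg_right t1 (Real.rpow_nonneg hs0.le _)
      have t5 : (1 + 1 / ε) ^ k * s ^ (ε * (k:ℝ)) * s ^ (l - 1)
          = (1 + 1 / ε) ^ k * s ^ (l + ε * k - 1) := by rw [mul_assoc, t3]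
      have t6 : (0:ℝ) ≤ s ^ (l / 2 - 1) := Real.rpow_nonneg hs0.le _
      nlinarith [pow_nonneg (by positivity : (0:ℝ) ≤ 1 + 1/ε) k]
  -- dominated convergence
  have hmain : Tendsto (fun n : ℝ => ∫ s in Ioi (0:ℝ), F n s) atTop
      (nhds (∫ s in Ioi (0:ℝ), Real.exp (-s) * (c * s ^ (l - 1)))) := by
    apply tendsto_integral_filter_of_dominated_convergence bound
    · exact Eventually.of_forall fun n =>
        (((hφc n).aestronglyMeasurable measurableSet_Ioi).indicator measurableSet_Ioo)
    · filter_upwards [eventually_ge_atTop (Real.exp 1)] with n hn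
      rw [ae_restrict_iff' measurableSet_Ioi]
      refine Eventually.of_forall fun s hs => ?_
      have hs0 : 0 < s := hs
      have hlogn : 1 ≤ Real.log n := by
        rw [← Real.log_exp 1]
        exact Real.log_le_log (Real.exp_pos 1) hn
      by_cases hmem : s ∈ Ioo (0:ℝ) n
      · rw [hF]
        simp only [indicator_of_mem hmem]
        have habs : |1 - Real.log s / Real.log n| ≤ 1 + |Real.log s| := by
          rw [sub_eq_add_neg]
          calc |1 + -(Real.log s / Real.log n)| ≤ |1| + |-(Real.log s / Real.log n)| :=
                abs_add_le _ _
            _ = 1 + |Real.log s| / |Real.log n| := by rw [abs_one, abs_neg, abs_div]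
            _ ≤ 1 + |Real.log s| := by
                have h1 : (1:ℝ) ≤ |Real.log n| := le_trans hlogn (le_abs_self _)
                have := div_le_self (abs_nonneg (Real.log s)) h1
                linarith
        have hnorm : ‖φ n s‖ = Real.exp (-s) *
            (c * s ^ (l - 1) * |1 - Real.log s / Real.log n| ^ k) := by
          rw [hφ, Real.norm_eq_abs]
          rw [abs_mul, abs_mul, abs_mul, abs_pow,
            abs_of_pos (Real.exp_pos _), abs_of_pos hc,
            abs_of_pos (Real.rpow_pos_of_pos hs0 _)]
        rw [hnorm, hbound]
        have h1 : |1 - Real.log s / Real.log n| ^ k ≤ (1 + |Real.log s|) ^ k :=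
          pow_le_pow_left₀ (abs_nonneg _) habs k
        have h2 := hkey s hs0
        have hexp : (0:ℝ) < Real.exp (-s) := Real.exp_pos _
        have hsp : (0:ℝ) ≤ s ^ (l - 1) := Real.rpow_nonneg hs0.le _
        calc Real.exp (-s) * (c * s ^ (l - 1) * |1 - Real.log s / Real.log n| ^ k)
            ≤ Real.exp (-s) * (c * s ^ (l - 1) * (1 + |Real.log s|) ^ k) := by
              apply mul_le_mul_of_nonneg_left _ hexp.le
              exact mul_le_mul_of_nonneg_left h1 (by positivity)
          _ = Real.exp (-s) * c * ((1 + |Real.log s|) ^ k * s ^ (l - 1)) := by ring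
          _ ≤ Real.exp (-s) * c *
              ((1 + 1 / ε) ^ k * (s ^ (l / 2 - 1) + s ^ (l + ε * k - 1))) := by
              apply mul_le_mul_of_nonneg_left h2 (by positivity)
          _ = c * (1 + 1 / ε) ^ k *
              (Real.exp (-s) * s ^ (l / 2 - 1) + Real.exp (-s) * s ^ (l + ε * k - 1)) := by
              ring
      · rw [hF]
        simp only [indicator_of_notMem hmem, norm_zero, hbound]
        positivity
    · have i1 := Real.GammaIntegral_convergent (by positivity : (0:ℝ) < l / 2)
      have i2 := Real.GammaIntegral_convergent (by positivity : (0:ℝ) < l + ε * k)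
      have h3 : (∀ x : ℝ, l / 2 - 1 = l / 2 - 1) := fun _ => rfl
      have := (i1.add i2).const_mul (c * (1 + 1 / ε) ^ k)
      simpa [hbound] using this
    · rw [ae_restrict_iff' measurableSet_Ioi]
      refine Eventually.of_forall fun s hs => ?_
      have hs0 : 0 < s := hs
      have h0 : Tendsto (fun n : ℝ => Real.log s / Real.log n) atTop (nhds 0) :=
        tendsto_const_nhds.div_atTop Real.tendsto_log_atTop
      have hlim : Tendsto (fun n : ℝ => 1 - Real.log s / Real.log n) atTop (nhds 1) := by
        have := tendsto_const_nhds.sub h0 (f := fun _ : ℝ => (1:ℝ))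
        simpa using this
      have hlim2 : Tendsto (fun n : ℝ => φ n s) atTop
          (nhds (Real.exp (-s) * (c * s ^ (l - 1)))) := by
        have : Tendsto (fun n : ℝ => Real.exp (-s) *
            (c * s ^ (l - 1) * (1 - Real.log s / Real.log n) ^ k)) atTop
            (nhds (Real.exp (-s) * (c * s ^ (l - 1) * 1 ^ k))) :=
          tendsto_const_nhds.mul (tendsto_const_nhds.mul (hlim.pow k))
        simpa [hφ] using this
      refine hlim2.congr' ?_
      filter_upwards [eventually_gt_atTop s] with n hn
      rw [hF]
      exact (Set.indicator_of_mem (mem_Ioo.mpr ⟨hs0, hn⟩) (φ n)).symm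
  have hΓ : (∫ s in Ioi (0:ℝ), Real.exp (-s) * (c * s ^ (l - 1))) = c * Real.Gamma l := by
    rw [Real.Gamma_eq_integral hl, ← integral_const_mul]
    congr 1
    funext s
    ring
  have heq : ∀ᶠ n : ℝ in atTop,
      (∫ s in Ioi (0:ℝ), F n s) =
        (∫ t in Ioo (0 : ℝ) 1,
            Real.exp (-(n * t)) * (c * t ^ (l - 1) * (-Real.log t) ^ k))
          * n ^ l / (Real.log n) ^ k := by
    filter_upwards [eventually_ge_atTop (Real.exp 1)] with n hn
    have hn1 : (1:ℝ) < n := by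
      have := Real.add_one_le_exp (1:ℝ)
      linarith
    have hn0 : (0:ℝ) < n := by linarith
    have hlogn : 0 < Real.log n := Real.log_pos hn1
    have step1 : (∫ s in Ioi (0:ℝ), F n s) = ∫ s in Ioo (0:ℝ) n, φ n s := by
      rw [hF, integral_indicator measurableSet_Ioo,
        Measure.restrict_restrict measurableSet_Ioo,
        inter_eq_self_of_subset_left Ioo_subset_Ioi_self]
    have step2 : (∫ s in Ioo (0:ℝ) n, φ n s) = ∫ s in (0:ℝ)..n, φ n s := by
      rw [intervalIntegral.integral_of_le hn0.le, integral_Ioc_eq_integral_Ioo]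
    have step3 : (∫ s in (0:ℝ)..n, φ n s) = n * ∫ t in (0:ℝ)..1, φ n (n * t) := by
      have := intervalIntegral.smul_integral_comp_mul_left (f := φ n) (a := 0) (b := 1) n
      rw [mul_zero, mul_one] at this
      rw [← this, smul_eq_mul]
    have step4 : (∫ t in (0:ℝ)..1, φ n (n * t)) = ∫ t in Ioo (0:ℝ) 1, φ n (n * t) := by
      rw [intervalIntegral.integral_of_le zero_le_one, integral_Ioc_eq_integral_Ioo]
    have step5 : (∫ t in Ioo (0:ℝ) 1, φ n (n * t)) =
        ∫ t in Ioo (0:ℝ) 1,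
          (Real.exp (-(n * t)) * (c * t ^ (l - 1) * (-Real.log t) ^ k))
            * (n ^ (l - 1) / (Real.log n) ^ k) := by
      refine setIntegral_congr_fun measurableSet_Ioo fun t ht => ?_
      obtain ⟨ht0, ht1⟩ := ht
      have h1 : (n * t) ^ (l - 1) = n ^ (l - 1) * t ^ (l - 1) :=
        Real.mul_rpow hn0.le ht0.le
      have h2 : 1 - Real.log (n * t) / Real.log n = -Real.log t / Real.log n := by
        rw [Real.log_mul (ne_of_gt hn0) (ne_of_gt ht0)]
        field_simp
        ring
      rw [hφ]
      simp only []
      rw [h1, h2, div_pow]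
      ring
    have step6 : (∫ t in Ioo (0:ℝ) 1,
          (Real.exp (-(n * t)) * (c * t ^ (l - 1) * (-Real.log t) ^ k))
            * (n ^ (l - 1) / (Real.log n) ^ k)) =
        (∫ t in Ioo (0:ℝ) 1,
          Real.exp (-(n * t)) * (c * t ^ (l - 1) * (-Real.log t) ^ k))
            * (n ^ (l - 1) / (Real.log n) ^ k) := by
      rw [integral_mul_const]
    have hnl : n ^ l = n * n ^ (l - 1) := by
      have h := Real.rpow_add hn0 1 (l - 1)
      rw [show (1:ℝ) + (l - 1) = l by ring, Real.rpow_one] at h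
      exact h
    rw [step1, step2, step3, step4, step5, step6, hnl]
    ring
  refine Tendsto.congr' heq ?_
  rw [← hΓ]
  exact hmain
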